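/- For any non-decreasing sequence of positive reals $y_1 \le y_2 \le \cdots$ and any positive integer $T$, we have $\max_{t \in [T]} \sum_{s=1}^{t} y_s / y_{t+1} \ge T / \big( (y_{T+1}/y_1)^{1/T} (1 + \log(y_{T+1}/y_1)) \big)$. -/

import Mathlib

open Finset

/-- For any non-decreasing sequence of positive reals and any positive integer `T`,
`max_{t ∈ [T]} ∑_{s=1}^t y_s / y_{t+1} ≥ T / ((y_{T+1}/y_1)^{1/T} (1 + log(y_{T+1}/y_1)))`. -/
theorem dog_sequence_lower_bound (y : ℕ → ℝ)
    (hpos : ∀ t, 1 ≤ t → 0 < y t)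
    (hmono : ∀ t, 1 ≤ t → y t ≤ y (t + 1))
    (T : ℕ) (hT : 1 ≤ T) :
    ∃ t ∈ Finset.Icc 1 T,
      (T : ℝ) / ((y (T + 1) / y 1) ^ ((1 : ℝ) / T) * (1 + Real.log (y (T + 1) / y 1)))
        ≤ ∑ s ∈ Finset.Icc 1 t, y s / y (t + 1) := by
  have hmono' : ∀ s t : ℕ, 1 ≤ s → s ≤ t → y s ≤ y t := by
    intro s t hs hst
    induction t, hst using Nat.le_induction with
    | base => exact le_rfl
    | succ n hn ih => exact ih.trans (hmono n (hs.trans hn))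
  have hy1 : 0 < y 1 := hpos 1 le_rfl
  set a : ℕ → ℝ := fun t => ∑ s ∈ Finset.Icc 1 t, y s / y (t + 1) with ha
  have ha_nonneg : ∀ t, 0 ≤ a t := by
    intro t
    refine Finset.sum_nonneg fun s hs => ?_
    obtain ⟨h1, h2⟩ := Finset.mem_Icc.mp hs
    exact div_nonneg (hpos s h1).le (hpos (t+1) (by omega)).le
  -- recurrence
  have harec : ∀ n : ℕ, 1 ≤ n → a (n+1) = (y (n+1) / y (n+2)) * (1 + a n) := by
    intro n hn
    have hyn1 : y (n+1) ≠ 0 := (hpos (n+1) (by omega)).ne'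
    have hyn2 : y (n+2) ≠ 0 := (hpos (n+2) (by omega)).ne'
    have h1 : (1:ℕ) ≤ n + 1 := by omega
    rw [ha]
    simp only
    rw [Finset.sum_Icc_succ_top h1, mul_add, mul_one, add_comm]
    congr 1
    rw [Finset.mul_sum]
    refine Finset.sum_congr rfl fun s hs => ?_
    field_simp
  -- telescoping log sum
  have tel : ∀ n : ℕ, ∑ t ∈ Finset.Icc 1 n, (Real.log (y t) - Real.log (y (t+1)))
      = Real.log (y 1) - Real.log (y (n+1)) := by
    intro n
    induction n with
    | zero => simp
    | succ m ih =>
      rw [Finset.sum_Icc_succ_top (by omega), ih]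
      ring
  -- key inductive claim
  have key : ∀ n : ℕ, 1 ≤ n → ∀ M : ℝ, (∀ t ∈ Finset.Icc 1 n, a t ≤ M) →
      ∑ t ∈ Finset.Icc 1 n, y t / y (t+1) ≤ M * Real.log (y (n+1) / y 1) + a n := by
    intro n hn
    induction n, hn using Nat.le_induction with
    | base =>
      intro M hM
      have h1 : a 1 ≤ M := hM 1 (by simp)
      have hM0 : 0 ≤ M := le_trans (ha_nonneg 1) h1
      have hlog : 0 ≤ Real.log (y 2 / y 1) :=
        Real.log_nonneg ((one_le_div hy1).mpr (hmono 1 le_rfl))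
      have hsum : ∑ t ∈ Finset.Icc 1 1, y t / y (t+1) = a 1 := by
        rw [ha]; simp
      rw [hsum]
      have ha1 : a 1 = y 1 / y 2 := by rw [ha]; simp
      nlinarith [mul_nonneg hM0 hlog]
    | succ n hn ih =>
      intro M hM
      have hMn : ∀ t ∈ Finset.Icc 1 n, a t ≤ M := by
        intro t ht
        obtain ⟨h1, h2⟩ := Finset.mem_Icc.mp ht
        exact hM t (Finset.mem_Icc.mpr ⟨h1, by omega⟩)
      have IH := ih M hMn
      have han : a n ≤ M := hM n (Finset.mem_Icc.mpr ⟨hn, by omega⟩)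
      have hM0 : 0 ≤ M := le_trans (ha_nonneg n) han
      have hyn1 : 0 < y (n+1) := hpos (n+1) (by omega)
      have hyn2 : 0 < y (n+2) := hpos (n+2) (by omega)
      have hq1 : y (n+1) / y (n+2) ≤ 1 := (div_le_one hyn2).mpr (hmono (n+1) (by omega))
      have hq0 : 0 < y (n+1) / y (n+2) := div_pos hyn1 hyn2
      -- 1 - q ≤ log (1/q)
      have hβ : 1 - y (n+1) / y (n+2) ≤ Real.log (y (n+2) / y (n+1)) := by
        have h := Real.log_le_sub_one_of_pos hq0
        have hlq : Real.log (y (n+1) / y (n+2)) = Real.log (y (n+1)) - Real.log (y (n+2)) :=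
          Real.log_div hyn1.ne' hyn2.ne'
        have hlq2 : Real.log (y (n+2) / y (n+1)) = Real.log (y (n+2)) - Real.log (y (n+1)) :=
          Real.log_div hyn2.ne' hyn1.ne'
        rw [hlq] at h
        rw [hlq2]
        linarith
      have hlsplit : Real.log (y (n+2) / y 1)
          = Real.log (y (n+1) / y 1) + Real.log (y (n+2) / y (n+1)) := by
        rw [Real.log_div hyn2.ne' hy1.ne', Real.log_div hyn1.ne' hy1.ne',
          Real.log_div hyn2.ne' hyn1.ne']
        ring
      have hrec := harec n hn
      rw [Finset.sum_Icc_succ_top (by omega : (1:ℕ) ≤ n + 1), hlsplit, hrec]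
      have hlogq0 : 0 ≤ Real.log (y (n+2) / y (n+1)) :=
        Real.log_nonneg ((one_le_div hyn1).mpr (hmono (n+1) (by omega)))
      nlinarith [mul_nonneg hM0 hlogq0, ha_nonneg n,
        mul_le_mul_of_nonneg_right han (by linarith : (0:ℝ) ≤ 1 - y (n+1) / y (n+2)),
        mul_le_mul_of_nonneg_left hβ hM0]
  -- abbreviations
  set ρ := Real.log (y (T + 1) / y 1) with hρdef
  have hyT1 : 0 < y (T+1) := hpos (T+1) (by omega)
  have hr : 0 < y (T+1) / y 1 := div_pos hyT1 hy1
  have hρ0 : 0 ≤ ρ := Real.log_nonneg ((one_le_div hy1).mpr (hmono' 1 (T+1) le_rfl (by omega)))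
  have hE : 0 < Real.exp (ρ / T) := Real.exp_pos _
  have hT0 : (T:ℝ) ≠ 0 := Nat.cast_ne_zero.mpr (by omega)
  -- AM-GM via exp
  have amgm : (T : ℝ) * (Real.exp (ρ / T))⁻¹ ≤ ∑ t ∈ Finset.Icc 1 T, y t / y (t+1) := by
    have hρ' : Real.log (y 1) - Real.log (y (T+1)) = -ρ := by
      rw [hρdef, Real.log_div hyT1.ne' hy1.ne']
      ring
    have hsum1 : ∑ t ∈ Finset.Icc 1 T,
        (Real.log (y t) - Real.log (y (t+1)) + ρ/T + 1) = T := by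
      rw [Finset.sum_add_distrib, Finset.sum_add_distrib, tel T, hρ',
        Finset.sum_const, Finset.sum_const, Nat.card_Icc]
      simp only [nsmul_eq_mul, Nat.add_sub_cancel, mul_one]
      field_simp
      ring
    calc (T:ℝ) * (Real.exp (ρ/T))⁻¹
        = ∑ t ∈ Finset.Icc 1 T,
            (Real.log (y t) - Real.log (y (t+1)) + ρ/T + 1) * (Real.exp (ρ/T))⁻¹ := by
          rw [← Finset.sum_mul, hsum1]
      _ ≤ ∑ t ∈ Finset.Icc 1 T, y t / y (t+1) := by
          refine Finset.sum_le_sum fun t ht => ?_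
          obtain ⟨h1, h2⟩ := Finset.mem_Icc.mp ht
          have hyt : 0 < y t := hpos t h1
          have hyt1 : 0 < y (t+1) := hpos (t+1) (by omega)
          have hz : 0 < y t / y (t+1) := div_pos hyt hyt1
          have hlz : Real.log (y t / y (t+1)) = Real.log (y t) - Real.log (y (t+1)) :=
            Real.log_div hyt.ne' hyt1.ne'
          have h := Real.add_one_le_exp (Real.log (y t / y (t+1)) + ρ/T)
          rw [Real.exp_add, Real.exp_log hz] at h
          have h2' := mul_le_mul_of_nonneg_right h (inv_nonneg.mpr hE.le)
          rw [mul_assoc, mul_inv_cancel₀ hE.ne', mul_one] at h2'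
          calc (Real.log (y t) - Real.log (y (t+1)) + ρ/T + 1) * (Real.exp (ρ/T))⁻¹
              = (Real.log (y t / y (t+1)) + ρ/T + 1) * (Real.exp (ρ/T))⁻¹ := by rw [hlz]
            _ ≤ y t / y (t+1) := h2'
  -- take the maximizer
  obtain ⟨t0, ht0, hmax⟩ := Finset.exists_max_image (Finset.Icc 1 T) a
    ⟨1, Finset.mem_Icc.mpr ⟨le_rfl, hT⟩⟩
  refine ⟨t0, ht0, ?_⟩
  have hMT := key T hT (a t0) (fun t ht => hmax t ht)
  have haT : a T ≤ a t0 := hmax T (Finset.mem_Icc.mpr ⟨hT, le_rfl⟩)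
  have hM0 : 0 ≤ a t0 := ha_nonneg t0
  have h2 : (T:ℝ) * (Real.exp (ρ/T))⁻¹ ≤ a t0 * (1 + ρ) := by nlinarith
  have hu : (y (T + 1) / y 1) ^ ((1:ℝ)/T) = Real.exp (ρ / T) := by
    rw [Real.rpow_def_of_pos hr, ← hρdef, mul_one_div]
  show (T : ℝ) / ((y (T + 1) / y 1) ^ ((1 : ℝ) / T) * (1 + ρ)) ≤ a t0
  rw [hu, div_le_iff₀ (mul_pos hE (by linarith : (0:ℝ) < 1 + ρ))]
  have h3 := mul_le_mul_of_nonneg_right h2 hE.le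
  rw [mul_assoc, inv_mul_cancel₀ hE.ne', mul_one] at h3
  calc (T:ℝ) ≤ a t0 * (1 + ρ) * Real.exp (ρ/T) := h3
    _ = a t0 * (Real.exp (ρ/T) * (1 + ρ)) := by ring
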